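/- Fix c ∈ ℝ and define X̃ : ℝ² → M₂(ℂ) by X̃(ũ,v) = e^{cv}·[[ũ², ũ·e^{iv}],[ũ·e^{−iv}, 1]]. Then: (i) ⟨∂_v X̃(ũ,v), ∂_v X̃(ũ,v)⟩ = e^{2cv}·ũ² for all (ũ,v); (ii) consequently the curve L(v) := X̃(0,v) is lightlike, i.e. ⟨L′(v), L′(v)⟩ = 0 for all v; and (iii) L(v) = R^H(−cv/2)·[[0,0],[0,1]]·R^H(−cv/2)⋆ where R^H(t) = diag(e^t, e^{−t}), so L is a lightlike circle generated by hyperbolic rotations. -/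

import Mathlib

open Matrix

/-- The Lorentz inner product on 2×2 complex matrices, via determinant polarization. -/
noncomputable def ip (V W : Matrix (Fin 2) (Fin 2) ℂ) : ℂ :=
  -(1 / 2) * ((V + W).det - V.det - W.det)

/-- The analytic extension X̃ of the non-rotational zero mean curvature surface. -/
noncomputable def Xt (c : ℝ) (u v : ℝ) : Matrix (Fin 2) (Fin 2) ℂ :=
  Complex.exp ((c : ℂ) * v) •
    !![(u : ℂ) ^ 2, (u : ℂ) * Complex.exp (Complex.I * v);
       (u : ℂ) * Complex.exp (-(Complex.I * v)), 1]

/-- Its partial derivative in v. -/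
noncomputable def XtV (c : ℝ) (u v : ℝ) : Matrix (Fin 2) (Fin 2) ℂ :=
  !![(c : ℂ) * Complex.exp ((c : ℂ) * v) * (u : ℂ) ^ 2,
     (u : ℂ) * ((c : ℂ) + Complex.I) * Complex.exp (((c : ℂ) + Complex.I) * v);
     (u : ℂ) * ((c : ℂ) - Complex.I) * Complex.exp (((c : ℂ) - Complex.I) * v),
     (c : ℂ) * Complex.exp ((c : ℂ) * v)]

/-- The hyperbolic rotation R^H(t) = diag(e^{t}, e^{-t}). -/
noncomputable def RH (t : ℝ) : Matrix (Fin 2) (Fin 2) ℂ :=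
  !![(Real.exp t : ℂ), 0; 0, (Real.exp (-t) : ℂ)]

lemma aux_exp (a : ℂ) (v : ℝ) :
    HasDerivAt (fun v' : ℝ => Complex.exp (a * v')) (a * Complex.exp (a * v)) v := by
  have h := ((Complex.ofRealCLM.hasDerivAt (x := v)).const_mul a).cexp
  simp only [Complex.ofRealCLM_apply] at h
  convert h using 1
  push_cast; ring

theorem analytic_extension_lightlike_circle (c : ℝ) :
    -- (o) XtV is the partial derivative of Xt in v
    (∀ u v : ℝ, ∀ i j : Fin 2,
      HasDerivAt (fun v' => Xt c u v' i j) (XtV c u v i j) v) ∧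
    -- (i) ⟨X̃_v, X̃_v⟩ = e^{2cv}·ũ²
    (∀ u v : ℝ, ip (XtV c u v) (XtV c u v) = ((Real.exp (2 * c * v) * u ^ 2 : ℝ) : ℂ)) ∧
    -- (ii) the curve L(v) = X̃(0,v) is lightlike
    (∀ v : ℝ, ip (XtV c 0 v) (XtV c 0 v) = 0) ∧
    -- (iii) L is a lightlike circle generated by hyperbolic rotations
    (∀ v : ℝ, Xt c 0 v = RH (-(c * v) / 2) * !![0, 0; 0, 1] * (RH (-(c * v) / 2))ᴴ) := by
  have hi : ∀ u v : ℝ, ip (XtV c u v) (XtV c u v) = ((Real.exp (2 * c * v) * u ^ 2 : ℝ) : ℂ) := by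
    intro u v
    simp only [ip, XtV, Matrix.det_fin_two, Matrix.add_apply, Matrix.cons_val',
      Matrix.cons_val_zero, Matrix.cons_val_one, Matrix.head_cons, Matrix.head_fin_const,
      Matrix.empty_val', Matrix.cons_val_fin_one, Matrix.of_apply]
    push_cast [Complex.ofReal_exp]
    rw [show ((c:ℂ)+Complex.I)*(v:ℂ) = (c:ℂ)*v + Complex.I*v by ring,
        show ((c:ℂ)-Complex.I)*(v:ℂ) = (c:ℂ)*v - Complex.I*v by ring,
        show (2:ℂ)*(c:ℂ)*(v:ℂ) = (c:ℂ)*v + (c:ℂ)*v by ring,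
        Complex.exp_add, Complex.exp_add, Complex.exp_sub]
    have h1 : Complex.exp (Complex.I * v) ≠ 0 := Complex.exp_ne_zero _
    field_simp
    ring_nf
    rw [Complex.I_sq]
    ring
  refine ⟨?_, hi, ?_, ?_⟩
  · intro u v i j
    fin_cases i <;> fin_cases j <;>
      simp only [Xt, XtV, Matrix.smul_apply, smul_eq_mul, Fin.zero_eta, Fin.mk_one,
        Matrix.cons_val', Matrix.cons_val_zero, Matrix.cons_val_one, Matrix.head_cons,
        Matrix.head_fin_const, Matrix.empty_val', Matrix.cons_val_fin_one, Matrix.of_apply]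
    · exact (aux_exp c v).mul_const _
    · have h := ((aux_exp ((c : ℂ) + Complex.I) v).const_mul (u : ℂ))
      have heq : (fun v' : ℝ => Complex.exp ((c:ℂ) * v') * ((u:ℂ) * Complex.exp (Complex.I * v')))
          = fun v' : ℝ => (u:ℂ) * Complex.exp (((c:ℂ) + Complex.I) * v') := by
        funext v'; rw [add_mul, Complex.exp_add]; ring
      rw [heq]
      exact h.congr_deriv (by ring)
    · have h := ((aux_exp ((c : ℂ) - Complex.I) v).const_mul (u : ℂ))
      have heq : (fun v' : ℝ => Complex.exp ((c:ℂ) * v') *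
            ((u:ℂ) * Complex.exp (-(Complex.I * v'))))
          = fun v' : ℝ => (u:ℂ) * Complex.exp (((c:ℂ) - Complex.I) * v') := by
        funext v'; rw [sub_mul, Complex.exp_sub, Complex.exp_neg]; ring
      rw [heq]
      exact h.congr_deriv (by ring)
    · simpa using (aux_exp c v).mul_const 1
  · intro v
    simpa using hi 0 v
  · intro v
    ext i j
    fin_cases i <;> fin_cases j <;>
      simp [Xt, RH, Matrix.mul_apply, Fin.sum_univ_two, Matrix.conjTranspose_apply]
    rw [show (-(-((c:ℂ) * (v:ℂ)) / 2) : ℂ) = ((c*v/2 : ℝ) : ℂ) by push_cast; ring,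
      ← Complex.ofReal_exp, Complex.conj_ofReal]
    rw [show ((c:ℂ) * (v:ℂ)) = ((c*v : ℝ):ℂ) by push_cast; ring, ← Complex.ofReal_exp,
      ← Complex.ofReal_mul, ← Real.exp_add]
    norm_num
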